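/- Fix integers $n \geq 2$ and $m \in \{0,1\}$, and let $\mathfrak{g}$ be the Lie algebra with basis $h_1,\dots,h_n$ and brackets $[h_i,h_j] = (j-i) h_{i+j-(n-m+2)}$ for $i,j \geq 2$ (with $h_k = 0$ for $k \leq 0$), $[h_1,\cdot] = 0$. Then the subspace $\mathrm{span}\{h_1,\dots,h_{d_a}\}$ with $d_a = \lfloor (n+3-m)/2 \rfloor$ is a maximal abelian subalgebra among the subalgebras spanned by initial segments of the basis; i.e., $[h_i,h_j] = 0$ whenever $i,j \leq \lfloor (n+3-m)/2 \rfloor$, and if $d > \lfloor (n+3-m)/2 \rfloor$ then $\mathrm{span}\{h_1,\dots,h_d\}$ is not abelian. -/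

import Mathlib

/-- Structure constants of the quasi-Stäckel algebra for `m = 0, 1` (0-based indices):
`strC n m i j k` is the coefficient of `h_{k+1}` in `[h_{i+1}, h_{j+1}]`, encoding
`[hᵢ,hⱼ] = (j-i) h_{i+j-(n-m+2)}` for `i,j ≥ 2`, `[h₁,·] = 0`, `h_k = 0` for `k ≤ 0`. -/
def strC (n m : ℕ) (i j k : Fin n) : ℝ :=
  if 1 ≤ i.val ∧ 1 ≤ j.val ∧ k.val + (n - m + 1) = i.val + j.val
  then (j.val : ℝ) - (i.val : ℝ) else 0

/-- in the quasi-Stäckel Lie algebra for `m ∈ {0,1}`, the span of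
`h₁,…,h_{d_a}` with `d_a = ⌊(n+3-m)/2⌋` is abelian, and it is maximal among abelian
subalgebras spanned by initial segments of the basis: for any `d > d_a` the span of
`h₁,…,h_d` is not abelian. -/
theorem stmt10 {L : Type*} [LieRing L] [LieAlgebra ℝ L]
    (n m : ℕ) (hn : 2 ≤ n) (hm : m ≤ 1)
    (B : Module.Basis (Fin n) ℝ L)
    (hbr : ∀ i j : Fin n, ⁅B i, B j⁆ = ∑ k, strC n m i j k • B k) :
    (∀ i j : Fin n, i.val < (n + 3 - m) / 2 → j.val < (n + 3 - m) / 2 →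
      ⁅B i, B j⁆ = 0) ∧
    (∀ d : ℕ, (n + 3 - m) / 2 < d → d ≤ n →
      ∃ i j : Fin n, i.val < d ∧ j.val < d ∧ ⁅B i, B j⁆ ≠ 0) := by
  constructor
  · intro i j hi hj
    rw [hbr]
    apply Finset.sum_eq_zero
    intro k _
    have : strC n m i j k = 0 := by
      unfold strC
      split
      · rename_i h
        obtain ⟨h1, h2, h3⟩ := h
        have hij : i.val = j.val := by omega
        rw [hij]; ring
      · rfl
    rw [this, zero_smul]
  · intro d hd hdn
    have hiv : n - m + 2 - d < n := by omega
    have hjv : d - 1 < n := by omega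
    refine ⟨⟨n - m + 2 - d, hiv⟩, ⟨d - 1, hjv⟩, by simp only [Fin.val_mk]; omega, by simp only [Fin.val_mk]; omega, ?_⟩
    rw [hbr]
    have h0 : (0 : ℕ) < n := by omega
    have hsum : ∑ k, strC n m ⟨n - m + 2 - d, hiv⟩ ⟨d - 1, hjv⟩ k • B k
        = strC n m ⟨n - m + 2 - d, hiv⟩ ⟨d - 1, hjv⟩ ⟨0, h0⟩ • B ⟨0, h0⟩ := by
      apply Finset.sum_eq_single
      · intro k _ hk
        have : strC n m ⟨n - m + 2 - d, hiv⟩ ⟨d - 1, hjv⟩ k = 0 := by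
          unfold strC
          split
          · rename_i h
            exfalso
            apply hk
            ext
            simp only [Fin.val_mk] at h ⊢
            omega
          · rfl
        rw [this, zero_smul]
      · intro h; exact absurd (Finset.mem_univ _) h
    rw [hsum]
    have hc : strC n m ⟨n - m + 2 - d, hiv⟩ ⟨d - 1, hjv⟩ ⟨0, h0⟩
        = ((d - 1 : ℕ) : ℝ) - ((n - m + 2 - d : ℕ) : ℝ) := by
      unfold strC
      rw [if_pos]
      simp only [Fin.val_mk]
      omega
    rw [hc]
    apply smul_ne_zero
    · have hlt : (n - m + 2 - d) < (d - 1) := by omega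
      have : ((n - m + 2 - d : ℕ) : ℝ) < ((d - 1 : ℕ) : ℝ) := by exact_mod_cast hlt
      intro hzero
      rw [sub_eq_zero] at hzero
      exact absurd hzero (ne_of_gt this)
    · exact B.ne_zero _
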